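/- Let p, q be coprime positive integers, both odd, and let φ ∈ ℝ be such that cos(πps/q + φ) ≠ 0 for all integers s with 1 ≤ s ≤ 2q. Then ∑_{s=1}^{2q} (−1)^s · sign(cos(πps/q + φ)) equals 2 or −2. -/

import Mathlib

open Real Finset

lemma sign_cos_eq (θ : ℝ) (h : Real.cos θ ≠ 0) :
    Real.sign (Real.cos θ) = (-1 : ℝ) ^ ⌊θ / π + 1/2⌋ := by
  set n : ℤ := ⌊θ / π + 1/2⌋ with hn
  have hπ : (0:ℝ) < π := Real.pi_pos
  have h1 : (n : ℝ) ≤ θ / π + 1/2 := Int.floor_le _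
  have h2 : θ / π + 1/2 < n + 1 := Int.lt_floor_add_one _
  have h1' : (n:ℝ) * π - π/2 ≤ θ := by
    have := mul_le_mul_of_nonneg_right h1 hπ.le
    rw [add_mul, div_mul_cancel₀ _ hπ.ne'] at this
    linarith
  have h2' : θ < (n:ℝ) * π + π/2 := by
    have := mul_lt_mul_of_pos_right h2 hπ
    rw [add_mul, div_mul_cancel₀ _ hπ.ne'] at this
    linarith
  have hsq : ((-1:ℝ)^n) * ((-1:ℝ)^n) = 1 := by
    rw [← zpow_add₀ (by norm_num : (-1:ℝ) ≠ 0)]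
    exact Even.neg_one_zpow ⟨n, rfl⟩
  have hkey : Real.cos θ = (-1:ℝ)^n * Real.cos ((n:ℝ) * π - θ) := by
    rw [Real.cos_int_mul_pi_sub, ← mul_assoc, hsq, one_mul]
  have hmem : (n:ℝ) * π - θ ∈ Set.Icc (-(π/2)) (π/2) := by
    constructor <;> [linarith; linarith]
  have hnonneg : 0 ≤ Real.cos ((n:ℝ) * π - θ) := Real.cos_nonneg_of_mem_Icc hmem
  have hne : Real.cos ((n:ℝ) * π - θ) ≠ 0 := by
    intro h0; rw [hkey, h0, mul_zero] at h; exact h rfl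
  have hpos : 0 < Real.cos ((n:ℝ) * π - θ) := lt_of_le_of_ne hnonneg (Ne.symm hne)
  rcases Int.even_or_odd n with he | ho
  · rw [hkey, he.neg_one_zpow, one_mul, Real.sign_of_pos hpos]
  · rw [hkey, ho.neg_one_zpow]
    have : (-1:ℝ) * Real.cos ((n:ℝ)*π - θ) < 0 := by nlinarith
    rw [Real.sign_of_neg this]


lemma count_pm (q : ℕ) (hq : 0 < q) (hqodd : Odd q) (c : ℝ) :
    (∑ r ∈ Finset.range q, (-1:ℝ)^⌊(2*(r:ℝ))/(q:ℝ) + c⌋) = 1 ∨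
    (∑ r ∈ Finset.range q, (-1:ℝ)^⌊(2*(r:ℝ))/(q:ℝ) + c⌋) = -1 := by
  classical
  have hq0 : (0:ℝ) < (q:ℝ) := by exact_mod_cast hq
  set k0 : ℤ := ⌊c⌋ with hk0
  have hc1 : (k0:ℝ) ≤ c := Int.floor_le c
  have hc2 : c < (k0:ℝ) + 1 := Int.lt_floor_add_one c
  set β : ℝ := (q:ℝ)*((k0:ℝ)+1-c)/2 with hβ
  have hβpos : 0 < β := by
    apply div_pos (mul_pos hq0 (by linarith)) (by norm_num)
  have hβle : β ≤ (q:ℝ)/2 := by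
    rw [hβ, div_le_div_iff_of_pos_right (by norm_num : (0:ℝ) < 2)]
    nlinarith
  have hiff1 : ∀ r : ℕ, (β ≤ (r:ℝ) ↔ (k0:ℝ) + 1 ≤ 2*(r:ℝ)/(q:ℝ) + c) := by
    intro r
    constructor
    · intro h
      have h' : ((k0:ℝ)+1-c) * q ≤ 2*r := by rw [hβ] at h; nlinarith
      have := (le_div_iff₀ hq0).mpr h'
      linarith
    · intro h
      have h' : ((k0:ℝ)+1-c) ≤ 2*r/q := by linarith
      have := (le_div_iff₀ hq0).mp h'
      rw [hβ]; nlinarith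
  have hiff2 : ∀ r : ℕ, ((r:ℝ) < β + (q:ℝ)/2 ↔ 2*(r:ℝ)/(q:ℝ) + c < (k0:ℝ) + 2) := by
    intro r
    constructor
    · intro h
      have h' : 2*(r:ℝ) < ((k0:ℝ)+2-c) * q := by rw [hβ] at h; nlinarith
      have := (div_lt_iff₀ hq0).mpr h'
      linarith
    · intro h
      have h' : 2*(r:ℝ)/q < ((k0:ℝ)+2-c) := by linarith
      have := (div_lt_iff₀ hq0).mp h'
      rw [hβ]; nlinarith
  set P : ℕ → Prop := fun r => β ≤ (r:ℝ) ∧ (r:ℝ) < β + (q:ℝ)/2 with hP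
  have hpt : ∀ r ∈ Finset.range q, (-1:ℝ)^⌊(2*(r:ℝ))/(q:ℝ) + c⌋
      = (-1:ℝ)^k0 * (if P r then (-1:ℝ) else 1) := by
    intro r hr
    have hrq : (r:ℝ) < (q:ℝ) := by exact_mod_cast Finset.mem_range.mp hr
    have hr0 : (0:ℝ) ≤ (r:ℝ) := Nat.cast_nonneg r
    have hx0 : 0 ≤ 2*(r:ℝ)/(q:ℝ) := by positivity
    have hx2 : 2*(r:ℝ)/(q:ℝ) < 2 := by
      rw [div_lt_iff₀ hq0]; nlinarith
    by_cases h1 : β ≤ (r:ℝ)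
    · by_cases h2 : (r:ℝ) < β + (q:ℝ)/2
      · have hfl : ⌊(2*(r:ℝ))/(q:ℝ) + c⌋ = k0 + 1 := by
          rw [Int.floor_eq_iff]
          refine ⟨by push_cast; exact (hiff1 r).mp h1,
                  by push_cast; linarith [(hiff2 r).mp h2]⟩
        rw [hfl, if_pos (show P r from ⟨h1, h2⟩), zpow_add₀ (by norm_num : (-1:ℝ) ≠ 0)]
        norm_num
      · have hfl : ⌊(2*(r:ℝ))/(q:ℝ) + c⌋ = k0 + 2 := by
          rw [Int.floor_eq_iff]
          constructor
          · push_cast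
            by_contra hcon
            push_neg at hcon
            exact h2 ((hiff2 r).mpr hcon)
          · push_cast; linarith
        rw [hfl, if_neg (show ¬ P r from fun h => h2 h.2),
          zpow_add₀ (by norm_num : (-1:ℝ) ≠ 0)]
        norm_num
    · have hfl : ⌊(2*(r:ℝ))/(q:ℝ) + c⌋ = k0 := by
        rw [Int.floor_eq_iff]
        constructor
        · linarith
        · push_cast
          by_contra hcon
          push_neg at hcon
          exact h1 ((hiff1 r).mpr (by linarith))
      rw [hfl, if_neg (show ¬ P r from fun h => h1 h.1)]
      norm_num
  obtain ⟨k, hk⟩ := hqodd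
  set a : ℤ := ⌈β⌉ with ha
  set b : ℤ := ⌈β + (q:ℝ)/2⌉ with hb
  have ha1 : 1 ≤ a := Int.ceil_pos.mpr hβpos
  have hbq : b ≤ (q:ℤ) := by
    rw [hb]
    apply Int.ceil_le.mpr
    push_cast
    linarith
  have hbk : b = ⌈β + 1/2⌉ + (k:ℤ) := by
    have heq : β + (q:ℝ)/2 = (β + 1/2) + ((k:ℤ):ℝ) := by
      push_cast [hk]; ring
    rw [hb, heq, Int.ceil_add_intCast]
  have hδ : ⌈β + 1/2⌉ = a ∨ ⌈β + 1/2⌉ = a + 1 := by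
    have l1 : a ≤ ⌈β + 1/2⌉ := Int.ceil_le_ceil (by linarith)
    have l2 : ⌈β + 1/2⌉ ≤ a + 1 := by
      have h3 : (⌈β + 1⌉ : ℤ) = a + 1 := by rw [ha, Int.ceil_add_one]
      have := Int.ceil_le_ceil (R := ℝ) (show β + 1/2 ≤ β + 1 by linarith)
      omega
    omega
  have hfilter : (Finset.range q).filter P = Finset.Ico a.toNat b.toNat := by
    ext r
    simp only [Finset.mem_filter, Finset.mem_range, Finset.mem_Ico, hP]
    constructor
    · rintro ⟨_, h1, h2⟩
      refine ⟨Int.toNat_le.mpr (Int.ceil_le.mpr (by exact_mod_cast h1)), ?_⟩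
      exact Int.lt_toNat.mpr (Int.lt_ceil.mpr (by exact_mod_cast h2))
    · rintro ⟨h1, h2⟩
      have hb1 : (r:ℝ) < β + (q:ℝ)/2 := by
        have := Int.lt_ceil.mp (Int.lt_toNat.mp h2)
        exact_mod_cast this
      have ha1' : β ≤ (r:ℝ) := by
        have := Int.ceil_le.mp (Int.toNat_le.mp h1)
        exact_mod_cast this
      refine ⟨?_, ha1', hb1⟩
      have : (r:ℝ) < (q:ℝ) := by linarith
      exact_mod_cast this
  set N : ℕ := b.toNat - a.toNat with hN
  have hNk : N = k ∨ N = k + 1 := by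
    rcases hδ with h | h <;> omega
  have hNq : N ≤ q := by omega
  have hcard2 : ((Finset.range q).filter (fun r => ¬ P r)).card = q - N := by
    have := Finset.card_filter_add_card_filter_not (s := Finset.range q) (p := P)
    rw [hfilter, Nat.card_Ico, Finset.card_range] at this
    omega
  have hsum : (∑ r ∈ Finset.range q, (-1:ℝ)^⌊(2*(r:ℝ))/(q:ℝ) + c⌋)
      = (-1:ℝ)^k0 * ((q:ℝ) - 2*(N:ℝ)) := by
    rw [Finset.sum_congr rfl hpt, ← Finset.mul_sum]
    congr 1
    rw [Finset.sum_ite, Finset.sum_const, Finset.sum_const, hfilter, Nat.card_Ico, hcard2]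
    have hab : a.toNat ≤ b.toNat := by omega
    simp only [nsmul_eq_mul, mul_one, mul_neg_one]
    rw [Nat.cast_sub (show b.toNat - a.toNat ≤ q by omega), Nat.cast_sub hab]
    ring
  rw [hsum]
  have hq2 : (q:ℝ) = 2*k + 1 := by push_cast [hk]; ring
  rcases Int.even_or_odd k0 with hpar | hpar
  · rw [hpar.neg_one_zpow, one_mul]
    rcases hNk with h | h <;> rw [h] <;> [left; right] <;> rw [hq2] <;> push_cast <;> ring
  · rw [hpar.neg_one_zpow]
    rcases hNk with h | h <;> rw [h] <;> [right; left] <;> rw [hq2] <;> push_cast <;> ring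


/-- For coprime positive odd integers `p, q` and a phase `φ` such that
`cos(πps/q + φ) ≠ 0` for `s = 1, …, 2q`, the signed sum
`∑_{s=1}^{2q} (-1)^s sign(cos(πps/q + φ))` equals `2` or `-2`. -/
theorem winding_sum_odd (p q : ℕ) (hp : 0 < p) (hq : 0 < q)
    (hpq : Nat.Coprime p q) (hpodd : Odd p) (hqodd : Odd q) (φ : ℝ)
    (hcos : ∀ s ∈ Finset.Icc 1 (2 * q),
        Real.cos (π * (p : ℝ) * (s : ℝ) / (q : ℝ) + φ) ≠ 0) :
    (∑ s ∈ Finset.Icc 1 (2 * q),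
        (-1 : ℝ) ^ s * Real.sign (Real.cos (π * (p : ℝ) * (s : ℝ) / (q : ℝ) + φ)))
      = 2 ∨
    (∑ s ∈ Finset.Icc 1 (2 * q),
        (-1 : ℝ) ^ s * Real.sign (Real.cos (π * (p : ℝ) * (s : ℝ) / (q : ℝ) + φ)))
      = -2 := by
  classical
  haveI : NeZero q := ⟨hq.ne'⟩
  have hπ : (0:ℝ) < π := Real.pi_pos
  have hq0 : (0:ℝ) < (q:ℝ) := by exact_mod_cast hq
  set c : ℝ := φ / π + 1/2 with hc
  set F : ℕ → ℝ := fun s => (-1:ℝ)^⌊((p:ℝ)+(q:ℝ))*(s:ℝ)/(q:ℝ) + c⌋ with hF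
  have hne : (-1:ℝ) ≠ 0 := by norm_num
  -- Step A : rewrite each summand
  have hA : ∀ s ∈ Finset.Icc 1 (2*q),
      (-1:ℝ)^s * Real.sign (Real.cos (π * (p:ℝ) * (s:ℝ) / (q:ℝ) + φ)) = F s := by
    intro s hs
    rw [sign_cos_eq _ (hcos s hs)]
    have harg : (π*(p:ℝ)*(s:ℝ)/(q:ℝ) + φ)/π + 1/2 = (p:ℝ)*(s:ℝ)/(q:ℝ) + c := by
      rw [hc]; field_simp; ring
    rw [harg]
    have hfloor : ⌊((p:ℝ)+(q:ℝ))*(s:ℝ)/(q:ℝ) + c⌋ = ⌊(p:ℝ)*(s:ℝ)/(q:ℝ) + c⌋ + (s:ℤ) := by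
      rw [show ((p:ℝ)+(q:ℝ))*(s:ℝ)/(q:ℝ) + c = ((p:ℝ)*(s:ℝ)/(q:ℝ) + c) + ((s:ℤ):ℝ) by
        push_cast; field_simp; ring]
      exact Int.floor_add_intCast _ _
    rw [hF]
    simp only
    rw [hfloor, zpow_add₀ hne, ← zpow_natCast (-1:ℝ) s]
    push_cast
    ring
  rw [Finset.sum_congr rfl hA]
  -- periodicity
  have hEv : Even ((p+q : ℕ) : ℤ) := Int.even_coe_nat (p+q) |>.mpr (hpodd.add_odd hqodd)
  have hper : ∀ s, F (s + q) = F s := by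
    intro s
    have harg : ((p:ℝ)+(q:ℝ))*(((s:ℕ)+(q:ℕ) : ℕ):ℝ)/(q:ℝ) + c
        = (((p:ℝ)+(q:ℝ))*(s:ℝ)/(q:ℝ) + c) + (((p+q:ℕ):ℤ):ℝ) := by
      push_cast; field_simp; ring
    rw [hF]
    simp only
    rw [harg, Int.floor_add_intCast, zpow_add₀ hne, hEv.neg_one_zpow, mul_one]
  -- reduce Icc to shifted range
  have h1 : ∑ s ∈ Finset.Icc 1 (2*q), F s = ∑ i ∈ Finset.range (2*q), F (1 + i) := by
    rw [← Finset.Ico_add_one_right_eq_Icc, Finset.sum_Ico_eq_sum_range]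
    simp
  rw [h1]
  -- split the double period
  have h2 : ∑ i ∈ Finset.range (2*q), F (1 + i) = 2 * ∑ i ∈ Finset.range q, F (1 + i) := by
    rw [two_mul q, Finset.sum_range_add]
    have : ∀ i, F (1 + (q + i)) = F (1 + i) := by
      intro i
      rw [show 1 + (q + i) = (1 + i) + q by ring, hper]
    rw [Finset.sum_congr rfl (fun i _ => this i)]
    ring
  rw [h2]
  -- remove the shift
  have h3 : ∑ i ∈ Finset.range q, F (1 + i) = ∑ i ∈ Finset.range q, F i := by
    have e1 := Finset.sum_range_succ F q
    have e2 := Finset.sum_range_succ' F q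
    have e3 : F q = F 0 := by simpa using hper 0
    have e4 : ∀ i, F (1 + i) = F (i + 1) := fun i => by rw [Nat.add_comm]
    rw [Finset.sum_congr rfl (fun i _ => e4 i)]
    rw [e1, e3] at e2
    linarith
  rw [h3]
  -- step C : express F via residues
  obtain ⟨m, hm2⟩ := hpodd.add_odd hqodd
  have hmco : Nat.Coprime m q := by
    have h1' : Nat.Coprime q (p+q) := by
      rw [Nat.coprime_add_self_right]
      exact hpq.symm
    exact Nat.Coprime.coprime_dvd_left ⟨2, by omega⟩ h1'.symm
  set g : ℕ → ℝ := fun r => (-1:ℝ)^⌊(2*(r:ℝ))/(q:ℝ) + c⌋ with hg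
  have hpq2 : (p:ℝ)+(q:ℝ) = 2*(m:ℝ) := by
    have h5 : ((p+q:ℕ):ℝ) = ((m+m:ℕ):ℝ) := by rw [hm2]
    push_cast at h5
    linarith
  have hCD : ∀ i, F i = g ((m*i) % q) := by
    intro i
    obtain ⟨d, hdr⟩ : ∃ d, m*i = q*d + (m*i)%q := ⟨m*i/q, (Nat.div_add_mod _ _).symm⟩
    have hcast : (m:ℝ)*(i:ℝ) = (q:ℝ)*(d:ℝ) + (((m*i)%q : ℕ):ℝ) := by
      exact_mod_cast congrArg (fun n : ℕ => (n:ℝ)) hdr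
    have harg : ((p:ℝ)+(q:ℝ))*(i:ℝ)/(q:ℝ) + c
        = ((2*(((m*i)%q : ℕ):ℝ))/(q:ℝ) + c) + (((2*d : ℕ):ℤ):ℝ) := by
      rw [hpq2]
      push_cast
      field_simp
      nlinarith [hcast]
    rw [hF, hg]
    simp only
    rw [harg, Int.floor_add_intCast, zpow_add₀ hne]
    have hev2 : Even ((2*d : ℕ) : ℤ) := by
      refine (Int.even_coe_nat _).mpr ⟨d, by ring⟩
    rw [hev2.neg_one_zpow, mul_one]
  rw [Finset.sum_congr rfl (fun i _ => hCD i)]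
  -- step D : bijection
  set u : (ZMod q)ˣ := ZMod.unitOfCoprime m hmco with hu
  set m' : ℕ := ((u⁻¹ : (ZMod q)ˣ) : ZMod q).val with hm'
  have hinv : m' * m ≡ 1 [MOD q] := by
    have hz : ((m' * m : ℕ) : ZMod q) = ((1:ℕ) : ZMod q) := by
      push_cast
      have hm'z : ((m' : ℕ) : ZMod q) = ((u⁻¹ : (ZMod q)ˣ) : ZMod q) :=
        ZMod.natCast_rightInverse _
      have hmz : ((m : ℕ) : ZMod q) = (u : ZMod q) := (ZMod.coe_unitOfCoprime m hmco).symm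
      rw [hm'z, hmz, Units.inv_mul]
    exact (ZMod.natCast_eq_natCast_iff _ _ _).mp hz
  have hbij : ∑ i ∈ Finset.range q, g ((m*i) % q) = ∑ r ∈ Finset.range q, g r := by
    apply Finset.sum_nbij' (i := fun i => (m*i) % q) (j := fun r => (m'*r) % q)
    · intro a ha
      exact Finset.mem_range.mpr (Nat.mod_lt _ hq)
    · intro a ha
      exact Finset.mem_range.mpr (Nat.mod_lt _ hq)
    · intro a ha
      have h1' : m' * ((m*a) % q) ≡ m' * (m*a) [MOD q] := (Nat.mod_modEq _ _).mul_left m'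
      have h2' : m' * (m*a) = (m' * m) * a := by ring
      have h3' : (m' * m) * a ≡ 1 * a [MOD q] := hinv.mul_right a
      have : m' * ((m*a) % q) ≡ a [MOD q] := by
        calc m' * ((m*a) % q) ≡ m' * (m*a) [MOD q] := h1'
          _ = (m' * m) * a := h2'
          _ ≡ 1 * a [MOD q] := h3'
          _ = a := one_mul a
      have h4 : m' * ((m*a) % q) % q = a % q := this
      rwa [Nat.mod_eq_of_lt (Finset.mem_range.mp ha)] at h4
    · intro b hb
      have h1' : m * ((m'*b) % q) ≡ m * (m'*b) [MOD q] := (Nat.mod_modEq _ _).mul_left m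
      have h2' : m * (m'*b) = (m' * m) * b := by ring
      have h3' : (m' * m) * b ≡ 1 * b [MOD q] := hinv.mul_right b
      have : m * ((m'*b) % q) ≡ b [MOD q] := by
        calc m * ((m'*b) % q) ≡ m * (m'*b) [MOD q] := h1'
          _ = (m' * m) * b := h2'
          _ ≡ 1 * b [MOD q] := h3'
          _ = b := one_mul b
      have h4 : m * ((m'*b) % q) % q = b % q := this
      rwa [Nat.mod_eq_of_lt (Finset.mem_range.mp hb)] at h4
    · intro a ha
      rfl
  rw [hbij]
  rcases count_pm q hq hqodd c with h | h
  · left; rw [hg] at *; rw [h]; norm_num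
  · right; rw [hg] at *; rw [h]; norm_num
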